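/- Let $q \ge 2$ be an integer, $L$ a symmetric real $n \times n$ matrix with rows $L_i$, $P \ge 1$. Suppose $\mathbf{x}_1, \mathbf{x}_2 \in \mathbb{Z}^n$ both satisfy $|\mathbf{x}_j| \le P$ and $\|L_i(\mathbf{x}_j)\| < \tfrac{1}{2nP}$ for all $i$, and moreover $\mathbf{x}_1 \equiv \mathbf{x}_2 \pmod q$ componentwise and $[L_i(\mathbf{x}_1)] \equiv [L_i(\mathbf{x}_2)] \pmod q$ for all $i$, where $[z]$ is the nearest integer to $z$. Then $\mathbf{x} := (\mathbf{x}_2 - \mathbf{x}_1)/q$ is an integer vector with $|\mathbf{x}| \le 2P/q$ and $\|L_i(\mathbf{x})\| < \tfrac{1}{nqP}$ for all $i$. -/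

import Mathlib

theorem shrunk_vector_properties (n q : ℕ) (hq : 2 ≤ q)
    (L : Matrix (Fin n) (Fin n) ℝ) (hL : L.IsSymm) (P : ℝ) (hP : 1 ≤ P)
    (x₁ x₂ : Fin n → ℤ)
    (hx₁ : ∀ i, |(x₁ i : ℝ)| ≤ P) (hx₂ : ∀ i, |(x₂ i : ℝ)| ≤ P)
    (hL₁ : ∀ i, |(∑ j, L i j * (x₁ j : ℝ)) - round (∑ j, L i j * (x₁ j : ℝ))| < 1 / (2 * n * P))
    (hL₂ : ∀ i, |(∑ j, L i j * (x₂ j : ℝ)) - round (∑ j, L i j * (x₂ j : ℝ))| < 1 / (2 * n * P))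
    (hcong : ∀ i, (q : ℤ) ∣ (x₂ i - x₁ i))
    (hcong' : ∀ i, (q : ℤ) ∣ (round (∑ j, L i j * (x₂ j : ℝ)) - round (∑ j, L i j * (x₁ j : ℝ)))) :
    (∀ i, |(((x₂ i - x₁ i) / q : ℤ) : ℝ)| ≤ 2 * P / q) ∧
      ∀ i, |(∑ j, L i j * (((x₂ j - x₁ j) / q : ℤ) : ℝ))
          - round (∑ j, L i j * (((x₂ j - x₁ j) / q : ℤ) : ℝ))| < 1 / (n * q * P) := by
  have hq0 : (0:ℝ) < q := by positivity
  have hqne : (q:ℤ) ≠ 0 := by positivity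
  have hcast : ∀ j, (((x₂ j - x₁ j) / q : ℤ) : ℝ) = ((x₂ j : ℝ) - x₁ j) / q := by
    intro j
    obtain ⟨c, hc⟩ := hcong j
    have h2 : ((x₂ j : ℝ) - x₁ j) = q * c := by exact_mod_cast congrArg (Int.cast : ℤ → ℝ) hc
    rw [hc, Int.mul_ediv_cancel_left _ hqne, h2]
    field_simp
  constructor
  · intro i
    rw [hcast i, abs_div, abs_of_pos hq0, div_le_div_iff_of_pos_right hq0]
    calc |(x₂ i : ℝ) - x₁ i| ≤ |(x₂ i : ℝ)| + |(x₁ i : ℝ)| := abs_sub _ _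
      _ ≤ 2 * P := by linarith [hx₁ i, hx₂ i]
  · intro i
    have hn : 0 < n := Fin.pos i
    have hn0 : (0:ℝ) < n := by exact_mod_cast hn
    have hP0 : (0:ℝ) < P := by linarith
    set S₁ : ℝ := ∑ j, L i j * (x₁ j : ℝ) with hS₁
    set S₂ : ℝ := ∑ j, L i j * (x₂ j : ℝ) with hS₂
    have hT : (∑ j, L i j * (((x₂ j - x₁ j) / q : ℤ) : ℝ)) = (S₂ - S₁) / q := by
      rw [hS₁, hS₂, ← Finset.sum_sub_distrib, Finset.sum_div]
      refine Finset.sum_congr rfl fun j _ => ?_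
      rw [hcast j]
      ring
    obtain ⟨c, hc⟩ := hcong' i
    set T : ℝ := ∑ j, L i j * (((x₂ j - x₁ j) / q : ℤ) : ℝ) with hTdef
    have key : |T - (c : ℤ)| < 1 / (n * q * P) := by
      have hc' : ((round S₂ : ℝ) - round S₁) = q * c := by exact_mod_cast congrArg (Int.cast : ℤ → ℝ) hc
      have : T - (c:ℝ) = ((S₂ - round S₂) - (S₁ - round S₁)) / q := by
        rw [hT]
        field_simp
        linarith [hc']
      rw [this, abs_div, abs_of_pos hq0, div_lt_iff₀ hq0]
      have h1 := hL₁ i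
      have h2 := hL₂ i
      have habs : |(S₂ - round S₂) - (S₁ - round S₁)| ≤ |S₂ - round S₂| + |S₁ - round S₁| :=
        abs_sub _ _
      have : |(S₂ - round S₂) - (S₁ - round S₁)| < 1 / (n * P) := by
        have : 1 / (2 * n * P) + 1 / (2 * n * P) = 1 / (n * P) := by
          field_simp; ring
        linarith
      calc |(S₂ - round S₂) - (S₁ - round S₁)| < 1 / (n * P) := this
        _ = 1 / (n * q * P) * q := by field_simp
    calc |T - round T| ≤ |T - (c : ℤ)| := round_le T c
      _ < 1 / (n * q * P) := key
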